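/- Fix λ > 1 and define F(s,λ) = θ'(s) − δ(s) + s for 0 ≤ s < √λ − 1. Then F(0,λ) = 0, and there exists a unique s* ∈ (0, √λ − 1) with F(s*,λ) = 0; moreover F(s,λ) > 0 for all s ∈ (0, s*) and F(s,λ) < 0 for all s ∈ (s*, √λ − 1). -/

import Mathlib

open Filter Topology

/-- `θ'(s) = ((1+s²−λ) + √((1+s²−λ)² − 4s²))/2`. -/
noncomputable def theta' (s lam : ℝ) : ℝ :=
  ((1 + s ^ 2 - lam) + Real.sqrt ((1 + s ^ 2 - lam) ^ 2 - 4 * s ^ 2)) / 2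

/-- `δ(s) = s²λ/(λ−1)`. -/
noncomputable def adelta (s lam : ℝ) : ℝ := s ^ 2 * lam / (lam - 1)

/-- `F(s,λ) = θ'(s) − δ(s) + s`. -/
noncomputable def Ffun (s lam : ℝ) : ℝ := theta' s lam - adelta s lam + s

/-- Auxiliary cubic whose sign is opposite to that of `F`. -/
noncomputable def Qfun (s lam : ℝ) : ℝ :=
  lam * s ^ 3 - (lam + 1) * (lam - 1) * s ^ 2 + (lam + 2) * (lam - 1) ^ 2 * s - (lam - 1) ^ 3

lemma Bpos (lam x y : ℝ) (hlam : 1 < lam) :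
    0 < lam * (x ^ 2 + x * y + y ^ 2) - (lam ^ 2 - 1) * (x + y) + (lam + 2) * (lam - 1) ^ 2 := by
  have hsq : (0:ℝ) < (lam - 1) ^ 2 := by nlinarith
  nlinarith [sq_nonneg (2 * lam * x + lam * y - (lam ^ 2 - 1)),
    sq_nonneg (3 * lam * y - (lam ^ 2 - 1)),
    mul_pos hsq (show (0:ℝ) < 2 * lam ^ 2 + 4 * lam - 1 by nlinarith),
    show (0:ℝ) < lam by linarith]

lemma Qmono (lam : ℝ) (hlam : 1 < lam) : StrictMono fun s => Qfun s lam := by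
  intro x y hxy
  have hB := Bpos lam x y hlam
  have h := mul_pos (sub_pos.2 hxy) hB
  simp only [Qfun]
  nlinarith [h]

lemma Qend (r lam : ℝ) (h : r ^ 2 = lam) : Qfun (r - 1) lam = (r - 1) ^ 3 * lam ^ 2 := by
  subst h; simp only [Qfun]; ring

/-- Sign dictionary on the open interval. -/
lemma sign_lemma (lam s : ℝ) (hlam : 1 < lam) (hs : 0 < s) (hsb : s < Real.sqrt lam - 1) :
    (Ffun s lam < 0 ↔ 0 < Qfun s lam) ∧ (0 < Ffun s lam ↔ Qfun s lam < 0) := by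
  have hl1 : (0:ℝ) < lam - 1 := by linarith
  have hsq : (0:ℝ) < (lam - 1) ^ 2 := by nlinarith
  set a : ℝ := 1 + s ^ 2 - lam with ha
  set D : ℝ := a ^ 2 - 4 * s ^ 2 with hD
  set c : ℝ := adelta s lam - s with hc
  set w : ℝ := 2 * c - a with hw
  have hcval : c * (lam - 1) = s ^ 2 * lam - s * (lam - 1) := by
    simp only [hc, adelta]; field_simp
  have hwpos : 0 < w := by
    have h1 : 0 < w * (lam - 1) := by
      have : w * (lam - 1) = (lam + 1) * s ^ 2 - 2 * (lam - 1) * s + (lam - 1) ^ 2 := by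
        simp only [hw, ha]; nlinarith [hcval]
      rw [this]
      nlinarith [sq_nonneg ((lam + 1) * s - (lam - 1)), sq_nonneg (lam - 1)]
    nlinarith [h1, hl1]
  have hkey : (w ^ 2 - D) * (lam - 1) ^ 2 = 4 * s * Qfun s lam := by
    simp only [hw, hD, ha, hc, adelta, Qfun]
    field_simp
    ring
  have hF : Ffun s lam = (Real.sqrt D - w) / 2 := by
    simp only [Ffun, theta', ← ha, ← hD, hc, hw]; ring
  have hQiff1 : D < w ^ 2 ↔ 0 < Qfun s lam := by
    constructor
    · intro h; nlinarith [hkey, mul_pos (sub_pos.2 h) hsq, hs]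
    · intro h; nlinarith [hkey, hsq, hs, mul_pos hs h]
  have hQiff2 : w ^ 2 < D ↔ Qfun s lam < 0 := by
    constructor
    · intro h; nlinarith [hkey, mul_pos (sub_pos.2 h) hsq, hs]
    · intro h; nlinarith [hkey, hsq, hs, mul_pos hs (neg_pos.2 h)]
  constructor
  · rw [hF]
    constructor
    · intro h
      have hlt : Real.sqrt D < w := by linarith
      exact hQiff1.mp ((Real.sqrt_lt' hwpos).mp hlt)
    · intro h
      have := (Real.sqrt_lt' hwpos).mpr (hQiff1.mpr h)
      linarith
  · rw [hF]
    constructor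
    · intro h
      have hlt : w < Real.sqrt D := by linarith
      exact hQiff2.mp ((Real.lt_sqrt hwpos.le).mp hlt)
    · intro h
      have := (Real.lt_sqrt hwpos.le).mpr (hQiff2.mpr h)
      linarith

/-- fix `λ > 1` and let `F(s,λ) = θ'(s) − δ(s) + s` on `0 ≤ s < √λ − 1`.
Then `F(0,λ) = 0`, there is a unique `s* ∈ (0, √λ − 1)` with `F(s*,λ) = 0`, and
`F(s,λ) > 0` for `s ∈ (0, s*)` while `F(s,λ) < 0` for `s ∈ (s*, √λ − 1)`. -/
theorem stmt17 (lam : ℝ) (hlam : 1 < lam) :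
    Ffun 0 lam = 0 ∧
    ∃ sstar : ℝ, sstar ∈ Set.Ioo 0 (Real.sqrt lam - 1) ∧ Ffun sstar lam = 0 ∧
      (∀ s ∈ Set.Ioo 0 sstar, 0 < Ffun s lam) ∧
      (∀ s ∈ Set.Ioo sstar (Real.sqrt lam - 1), Ffun s lam < 0) ∧
      (∀ s ∈ Set.Ioo 0 (Real.sqrt lam - 1), Ffun s lam = 0 → s = sstar) := by
  have hl0 : (0:ℝ) ≤ lam := by linarith
  have hr : Real.sqrt lam ^ 2 = lam := Real.sq_sqrt hl0
  have hr1 : 1 < Real.sqrt lam := by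
    nlinarith [Real.sqrt_nonneg lam]
  set b : ℝ := Real.sqrt lam - 1 with hb
  have hbpos : 0 < b := by simp [hb]; linarith
  have hF0 : Ffun 0 lam = 0 := by
    simp only [Ffun, theta', adelta]
    rw [show (1 + (0:ℝ) ^ 2 - lam) ^ 2 - 4 * 0 ^ 2 = (lam - 1) ^ 2 by ring,
      Real.sqrt_sq (by linarith : (0:ℝ) ≤ lam - 1)]
    ring
  refine ⟨hF0, ?_⟩
  -- Q at the endpoints
  have hQ0 : Qfun 0 lam < 0 := by
    have h3 : (0:ℝ) < (lam - 1) ^ 3 := pow_pos (by linarith) 3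
    simp only [Qfun]
    nlinarith [h3]
  have hQb : 0 < Qfun b lam := by
    rw [hb, Qend (Real.sqrt lam) lam hr]
    have : 0 < Real.sqrt lam - 1 := by linarith
    positivity
  -- IVT
  have hcont : ContinuousOn (fun s => Qfun s lam) (Set.Icc 0 b) := by
    apply Continuous.continuousOn
    simp only [Qfun]
    continuity
  have hivt := intermediate_value_Ioo hbpos.le hcont
  have h0mem : (0:ℝ) ∈ Set.Ioo (Qfun 0 lam) (Qfun b lam) := ⟨hQ0, hQb⟩
  obtain ⟨sstar, hsmem, hQs0⟩ := hivt h0mem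
  have hQs : Qfun sstar lam = 0 := hQs0
  have hmono : ∀ x y : ℝ, x < y → Qfun x lam < Qfun y lam :=
    fun x y h => Qmono lam hlam h
  have hsign := fun s hs hsb => sign_lemma lam s hlam hs hsb
  have hFs : Ffun sstar lam = 0 := by
    obtain ⟨h1, h2⟩ := hsign sstar hsmem.1 hsmem.2
    rcases lt_trichotomy (Ffun sstar lam) 0 with h | h | h
    · exfalso; have := h1.mp h; rw [hQs] at this; exact lt_irrefl 0 this
    · exact h
    · exfalso; have := h2.mp h; rw [hQs] at this; exact lt_irrefl 0 this
  refine ⟨sstar, hsmem, hFs, ?_, ?_, ?_⟩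
  · intro s hs
    have hsb : s < b := lt_trans hs.2 hsmem.2
    have hQlt : Qfun s lam < 0 := by
      have := hmono s sstar hs.2
      rw [hQs] at this; exact this
    exact (hsign s hs.1 hsb).2.mpr hQlt
  · intro s hs
    have hs0 : 0 < s := lt_trans hsmem.1 hs.1
    have hQgt : 0 < Qfun s lam := by
      have := hmono sstar s hs.1
      rw [hQs] at this; exact this
    exact (hsign s hs0 hs.2).1.mpr hQgt
  · intro s hs hF
    by_contra hne
    obtain ⟨h1, h2⟩ := hsign s hs.1 hs.2
    rcases lt_or_gt_of_ne hne with h | h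
    · have hq := hmono s sstar h
      rw [hQs] at hq
      have := h2.mpr hq
      rw [hF] at this
      exact lt_irrefl 0 this
    · have hq := hmono sstar s h
      rw [hQs] at hq
      have := h1.mpr hq
      rw [hF] at this
      exact lt_irrefl 0 this
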